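/- Let A ∈ ℚ^{n×n} be invertible. Then ℤ^n[A] ∩ ℤ^n[A^{−1}], viewed as an additive subgroup of ℝ^n via the canonical inclusion ℚ^n ⊆ ℝ^n, is a lattice in ℝ^n: it is a discrete subgroup of ℝ^n (some open ball around 0 contains no nonzero element of it) that contains ℤ^n, and in particular it spans ℝ^n over ℝ. -/

import Mathlib

open Matrix

/-- `ℤ^n[M] = ⋃_{k≥1} (ℤ^n + Mℤ^n + ⋯ + M^{k-1}ℤ^n)`, the additive subgroup of `ℚ^n`
generated by all vectors `M^j z` with `z ∈ ℤ^n`. -/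
def intSpan (n : ℕ) (M : Matrix (Fin n) (Fin n) ℚ) : AddSubgroup (Fin n → ℚ) :=
  AddSubgroup.closure {x | ∃ (j : ℕ) (z : Fin n → ℤ), x = (M ^ j) *ᵥ fun i => (z i : ℚ)}

/-- `ℤ^n` as an additive subgroup of `ℚ^n`. -/
def intVecs (n : ℕ) : AddSubgroup (Fin n → ℚ) where
  carrier := {x | ∀ i, ∃ m : ℤ, x i = (m : ℚ)}
  zero_mem' := fun i => ⟨0, by simp⟩
  add_mem' := by
    intro a b ha hb i
    obtain ⟨ma, hma⟩ := ha i
    obtain ⟨mb, hmb⟩ := hb i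
    exact ⟨ma + mb, by simp [hma, hmb]⟩
  neg_mem' := by
    intro a ha i
    obtain ⟨ma, hma⟩ := ha i
    exact ⟨-ma, by simp [hma]⟩

/-- The Euclidean norm of the real vector obtained from a rational vector. -/
noncomputable def euclNormQ (n : ℕ) (z : Fin n → ℚ) : ℝ :=
  Real.sqrt (∑ i, ((z i : ℝ)) ^ 2)

namespace Stmt8

variable {n : ℕ}

instance autGroup (A : Type*) [Add A] : Group (AddAut A) :=
  inferInstanceAs (Group (Multiplicative (AddAut A)))

@[simp] lemma aut_mul_apply {A : Type*} [Add A] (e f : AddAut A) (x : A) : (e * f) x = e (f x) := rfl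

@[simp] lemma aut_one_apply {A : Type*} [Add A] (x : A) : (1 : AddAut A) x = x := rfl

@[simp] lemma aut_inv_def {A : Type*} [Add A] (e : AddAut A) : e⁻¹ = e.symm := rfl

/-- Vectors all of whose coordinates are integer multiples of `Q`. -/
def Dgrp (n : ℕ) (Q : ℚ) : AddSubgroup (Fin n → ℚ) where
  carrier := {x | ∀ i, ∃ m : ℤ, x i = (m : ℚ) * Q}
  zero_mem' := fun i => ⟨0, by simp⟩
  add_mem' := by
    intro a b ha hb i
    obtain ⟨ma, hma⟩ := ha i
    obtain ⟨mb, hmb⟩ := hb i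
    exact ⟨ma + mb, by simp only [Pi.add_apply]; rw [hma, hmb]; push_cast; ring⟩
  neg_mem' := by
    intro a ha i
    obtain ⟨ma, hma⟩ := ha i
    exact ⟨-ma, by simp only [Pi.neg_apply]; rw [hma]; push_cast; ring⟩

lemma mem_Dgrp {Q : ℚ} {x : Fin n → ℚ} :
    x ∈ Dgrp n Q ↔ ∀ i, ∃ m : ℤ, x i = (m : ℚ) * Q := Iff.rfl

lemma intVecs_eq_Dgrp : intVecs n = Dgrp n 1 := by
  ext x; simp [intVecs, Dgrp, AddSubgroup.mem_mk]

lemma Dgrp_le {Q1 Q2 : ℚ} (c : ℤ) (h : Q1 = (c : ℚ) * Q2) : Dgrp n Q1 ≤ Dgrp n Q2 := by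
  intro x hx i
  obtain ⟨m, hm⟩ := hx i
  exact ⟨m * c, by rw [hm, h]; push_cast; ring⟩

/-- image of a subgroup under an additive automorphism -/
def amap (e : AddAut (Fin n → ℚ)) (H : AddSubgroup (Fin n → ℚ)) : AddSubgroup (Fin n → ℚ) :=
  H.map e.toAddMonoidHom

lemma mem_amap {e : AddAut (Fin n → ℚ)} {H : AddSubgroup (Fin n → ℚ)} {x : Fin n → ℚ} :
    x ∈ amap e H ↔ ∃ y ∈ H, e y = x := by
  simp [amap, AddSubgroup.mem_map]

lemma amap_sup (e : AddAut (Fin n → ℚ)) (H K : AddSubgroup (Fin n → ℚ)) :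
    amap e (H ⊔ K) = amap e H ⊔ amap e K := by
  exact AddSubgroup.map_sup H K _

lemma amap_mono (e : AddAut (Fin n → ℚ)) {H K : AddSubgroup (Fin n → ℚ)} (h : H ≤ K) :
    amap e H ≤ amap e K := AddSubgroup.map_mono h

lemma amap_one (H : AddSubgroup (Fin n → ℚ)) : amap 1 H = H := by
  ext x; simp [mem_amap]

lemma amap_mul (e f : AddAut (Fin n → ℚ)) (H : AddSubgroup (Fin n → ℚ)) :
    amap (e * f) H = amap e (amap f H) := by
  ext x; simp only [mem_amap, aut_mul_apply]
  constructor
  · rintro ⟨y, hy, rfl⟩; exact ⟨f y, ⟨y, hy, rfl⟩, rfl⟩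
  · rintro ⟨z, ⟨y, hy, rfl⟩, rfl⟩; exact ⟨y, hy, rfl⟩

lemma relindex_amap (e : AddAut (Fin n → ℚ)) (H K : AddSubgroup (Fin n → ℚ)) :
    (amap e H).relIndex (amap e K) = H.relIndex K := by
  have h1 : amap e H = H.comap e.symm.toAddMonoidHom :=
    AddSubgroup.map_equiv_eq_comap_symm e H
  have h2 : (amap e K).map e.symm.toAddMonoidHom = K := by
    rw [amap, AddSubgroup.map_map]
    have : (e.symm.toAddMonoidHom.comp e.toAddMonoidHom) = AddMonoidHom.id _ := by
      ext x; simp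
    rw [this, AddSubgroup.map_id]
  rw [h1, AddSubgroup.relIndex_comap, h2]



/-- `Mf T k = ℤ^n + T ℤ^n + ⋯ + T^k ℤ^n`. -/
def Mf (T : AddAut (Fin n → ℚ)) : ℕ → AddSubgroup (Fin n → ℚ)
  | 0 => intVecs n
  | (k+1) => intVecs n ⊔ amap T (Mf T (k))

variable (T : AddAut (Fin n → ℚ))

lemma Mf_zero : Mf T 0 = intVecs n := rfl

lemma Mf_succ (k : ℕ) : Mf T (k+1) = intVecs n ⊔ amap T (Mf T k) := rfl

lemma Z_le_Mf (k : ℕ) : intVecs n ≤ Mf T k := by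
  cases k with
  | zero => exact le_of_eq (Mf_zero T).symm
  | succ k => exact le_sup_left

lemma Mf_le_succ (k : ℕ) : Mf T k ≤ Mf T (k+1) := by
  induction k with
  | zero => exact le_sup_left
  | succ k ih => rw [Mf_succ, Mf_succ]; exact sup_le_sup_left (amap_mono T ih) _

lemma Mf_mono : Monotone (Mf T) := monotone_nat_of_le_succ (Mf_le_succ T)

lemma Mf_top (k : ℕ) : Mf T (k+1) = Mf T k ⊔ amap (T^(k+1)) (intVecs n) := by
  induction k with
  | zero => rw [Mf_succ, Mf_zero, pow_one]
  | succ k ih =>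
      calc Mf T (k+2) = intVecs n ⊔ amap T (Mf T (k+1)) := rfl
        _ = intVecs n ⊔ amap T (Mf T k ⊔ amap (T^(k+1)) (intVecs n)) := by rw [ih]
        _ = (intVecs n ⊔ amap T (Mf T k)) ⊔ amap (T * T^(k+1)) (intVecs n) := by
              rw [amap_sup, amap_mul, sup_assoc]
        _ = Mf T (k+1) ⊔ amap (T^(k+2)) (intVecs n) := by rw [← pow_succ', Mf_succ]

lemma amap_pow_Z_le (k : ℕ) : amap (T^k) (intVecs n) ≤ Mf T k := by
  cases k with
  | zero => rw [pow_zero, amap_one, Mf_zero]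
  | succ k => rw [Mf_top]; exact le_sup_right

lemma Mf_sup_succ (k : ℕ) : Mf T (k+1) = Mf T k ⊔ amap T (Mf T k) := by
  refine le_antisymm ?_ ?_
  · rw [Mf_succ]; exact sup_le_sup_right (Z_le_Mf T k) _
  · exact sup_le (Mf_le_succ T k) (by rw [Mf_succ]; exact le_sup_right)

lemma amap_Mf_le (k : ℕ) : amap T (Mf T k) ≤ Mf T (k+1) := by
  rw [Mf_sup_succ]; exact le_sup_right

lemma Mf_shift (k j : ℕ) : Mf T (k + j) = Mf T k ⊔ amap (T^k) (Mf T j) := by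
  induction j with
  | zero =>
      rw [Nat.add_zero, Mf_zero]
      exact (sup_eq_left.mpr (amap_pow_Z_le T k)).symm
  | succ j ih =>
      calc Mf T (k + (j+1)) = Mf T ((k+j)+1) := rfl
        _ = (Mf T k ⊔ amap (T^k) (Mf T j)) ⊔ amap (T^(k+j)*T) (intVecs n) := by
              rw [Mf_top, ih, ← pow_succ]
        _ = Mf T k ⊔ amap (T^k) (Mf T j ⊔ amap (T^(j+1)) (intVecs n)) := by
              rw [amap_sup, sup_assoc, ← amap_mul, pow_succ, pow_add, mul_assoc]
        _ = Mf T k ⊔ amap (T^k) (Mf T (j+1)) := by rw [← Mf_top]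

lemma amap_pow_Mf_le (k j : ℕ) : amap (T^k) (Mf T j) ≤ Mf T (k + j) := by
  rw [Mf_shift]; exact le_sup_right

lemma TkNk (k : ℕ) : amap (T^k) (Mf T⁻¹ k) = Mf T k := by
  induction k with
  | zero => rw [pow_zero, amap_one]; rfl
  | succ k ih =>
      rw [Mf_top T⁻¹ k, amap_sup]
      have h1 : amap (T^(k+1)) (Mf T⁻¹ k) = amap T (Mf T k) := by
        rw [pow_succ', amap_mul, ih]
      have h2 : amap (T^(k+1)) (amap (T⁻¹^(k+1)) (intVecs n)) = intVecs n := by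
        rw [← amap_mul, inv_pow, mul_inv_cancel, amap_one]
      rw [h1, h2, Mf_succ, sup_comm]

lemma supMN (k : ℕ) : amap (T^k) (Mf T k ⊔ Mf T⁻¹ k) = Mf T (2*k) := by
  rw [amap_sup, TkNk, two_mul, Mf_shift, sup_comm]




lemma core (c : ℕ) (hc : c ≠ 0) (Q : ℚ) (hQ : Q ≠ 0) :
    (Dgrp n ((c : ℚ) * Q)).relIndex (Dgrp n Q) ≠ 0 := by
  haveI : NeZero c := ⟨hc⟩
  set K' := Dgrp n Q with hK'
  have hdiv : ∀ m : ℤ, ((m : ℚ) * Q) / Q = (m : ℚ) := fun m => mul_div_cancel_right₀ _ hQ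
  -- the reduction-mod-c homomorphism
  let ψ : K' →+ (Fin n → ZMod c) :=
    { toFun := fun x i => (((x.1 i) / Q).num : ZMod c)
      map_zero' := by
        funext i
        simp
      map_add' := by
        intro x y
        funext i
        obtain ⟨m1, h1⟩ := x.2 i
        obtain ⟨m2, h2⟩ := y.2 i
        have hx : ((x + y : K').1) i = ((m1 + m2 : ℤ) : ℚ) * Q := by
          push_cast
          simp only [AddSubgroup.coe_add, Pi.add_apply]
          rw [h1, h2]; ring
        show ((((x + y : K').1 i) / Q).num : ZMod c)
            = (((x.1 i) / Q).num : ZMod c) + (((y.1 i) / Q).num : ZMod c)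
        rw [hx, hdiv, h1, h2, hdiv, hdiv, ← Int.cast_add, Rat.num_intCast]
        simp }
  have hker : ψ.ker ≤ (Dgrp n ((c : ℚ) * Q)).addSubgroupOf K' := by
    intro x hx
    have hx0 : ∀ i, (((x.1 i) / Q).num : ZMod c) = 0 := fun i => congrFun hx i
    rw [AddSubgroup.mem_addSubgroupOf]
    intro i
    obtain ⟨m, hm⟩ := x.2 i
    have : ((m : ZMod c)) = 0 := by
      have := hx0 i
      rwa [hm, hdiv, Rat.num_intCast] at this
    obtain ⟨t, ht⟩ := (ZMod.intCast_zmod_eq_zero_iff_dvd m c).mp this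
    exact ⟨t, by rw [hm, ht]; push_cast; ring⟩
  have h1 : ((Dgrp n ((c : ℚ) * Q)).addSubgroupOf K').index ∣ ψ.ker.index :=
    AddSubgroup.index_dvd_of_le hker
  have h2 : ψ.ker.index ≠ 0 := by
    rw [AddSubgroup.index_ker]
    haveI : Finite (Fin n → ZMod c) := inferInstance
    haveI : Finite ψ.range := Subtype.finite
    haveI : Nonempty ψ.range := ⟨0, zero_mem _⟩
    exact Nat.card_pos.ne'
  intro h
  have h0 : ((Dgrp n ((c : ℚ) * Q)).addSubgroupOf K').index = 0 := h
  rw [h0, zero_dvd_iff] at h1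
  exact h2 h1

/-- `T` scales denominators by at most `q`. -/
def ClearDen (T : AddAut (Fin n → ℚ)) (q : ℕ) : Prop :=
  ∀ (Q : ℚ) (x : Fin n → ℚ), x ∈ Dgrp n Q → T x ∈ Dgrp n (Q / q)

variable (T : AddAut (Fin n → ℚ)) {q : ℕ}

lemma pow_memD (hq : q ≠ 0) (hT : ClearDen T q) (j : ℕ) (Q : ℚ) (x : Fin n → ℚ)
    (hx : x ∈ Dgrp n Q) : (T^j) x ∈ Dgrp n (Q / (q:ℚ)^j) := by
  induction j with
  | zero => rw [pow_zero, pow_zero, div_one]; rw [aut_one_apply]; exact hx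
  | succ j ih =>
      have h1 : (T^(j+1)) x = T ((T^j) x) := by rw [pow_succ', aut_mul_apply]
      have h2 : Q / (q:ℚ)^j / q = Q / (q:ℚ)^(j+1) := by
        rw [div_div, ← pow_succ]
      rw [h1, ← h2]
      exact hT _ _ ih

lemma Mf_le_D (hq : q ≠ 0) (hT : ClearDen T q) (k : ℕ) :
    Mf T k ≤ Dgrp n (1 / (q:ℚ)^k) := by
  have hq' : ((q:ℚ)) ≠ 0 := Nat.cast_ne_zero.mpr hq
  induction k with
  | zero => rw [Mf_zero, intVecs_eq_Dgrp]; rw [pow_zero, div_one]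
  | succ k ih =>
      rw [Mf_succ]
      apply sup_le
      · rw [intVecs_eq_Dgrp]
        have hEq : (1:ℚ) = (((q^(k+1) : ℤ)) : ℚ) * (1 / (q:ℚ)^(k+1)) := by
          push_cast
          field_simp
        exact Dgrp_le _ hEq
      · rintro x ⟨y, hy, rfl⟩
        have := hT _ y (ih hy)
        have he : 1 / (q:ℚ)^k / q = 1 / (q:ℚ)^(k+1) := by rw [div_div, ← pow_succ]
        rwa [he] at this

lemma D_le_amap_pow (hq : q ≠ 0) (hT' : ClearDen T⁻¹ q) (j : ℕ) :
    Dgrp n ((q:ℚ)^j) ≤ amap (T^j) (intVecs n) := by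
  have hq' : ((q:ℚ)) ≠ 0 := Nat.cast_ne_zero.mpr hq
  intro x hx
  have hy : (T⁻¹^j) x ∈ Dgrp n ((q:ℚ)^j / (q:ℚ)^j) := pow_memD T⁻¹ hq hT' j _ x hx
  rw [div_self (pow_ne_zero _ hq')] at hy
  rw [mem_amap]
  refine ⟨(T⁻¹^j) x, ?_, ?_⟩
  · rw [intVecs_eq_Dgrp]
    intro i
    obtain ⟨m, hm⟩ := hy i
    exact ⟨m, by rw [hm, mul_one]⟩
  · rw [inv_pow]
    simp


lemma relindex_ne_zero {q : ℕ} (hq : q ≠ 0) {H K : AddSubgroup (Fin n → ℚ)} (a b : ℕ)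
    (hH : Dgrp n ((q:ℚ)^a) ≤ H) (hHK : H ≤ K) (hK : K ≤ Dgrp n (1/(q:ℚ)^b)) :
    H.relIndex K ≠ 0 := by
  have hq' : ((q:ℚ)) ≠ 0 := Nat.cast_ne_zero.mpr hq
  have hDD : Dgrp n ((q:ℚ)^a) ≤ Dgrp n (1/(q:ℚ)^b) := le_trans hH (le_trans hHK hK)
  have h0 : (Dgrp n ((q:ℚ)^a)).relIndex (Dgrp n (1/(q:ℚ)^b)) ≠ 0 := by
    have he : ((q:ℚ)^a) = ((q^(a+b) : ℕ) : ℚ) * (1/(q:ℚ)^b) := by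
      push_cast
      rw [pow_add]
      field_simp
    rw [he]
    exact core (q^(a+b)) (pow_ne_zero _ hq) _ (by positivity)
  have t1 := AddSubgroup.relIndex_mul_relIndex (Dgrp n ((q:ℚ)^a)) K (Dgrp n (1/(q:ℚ)^b))
    (le_trans hH hHK) hK
  have t2 := AddSubgroup.relIndex_mul_relIndex (Dgrp n ((q:ℚ)^a)) H K hH hHK
  intro h
  rw [← t1, ← t2, h] at h0
  simp at h0

/-- `[M_{k+1} : M_k]` -/
noncomputable def lidx (T : AddAut (Fin n → ℚ)) (k : ℕ) : ℕ := (Mf T k).relIndex (Mf T (k+1))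

/-- `[M_{k+1} : T M_k]` -/
noncomputable def ridx (T : AddAut (Fin n → ℚ)) (k : ℕ) : ℕ := (amap T (Mf T k)).relIndex (Mf T (k+1))

variable (T : AddAut (Fin n → ℚ)) {q : ℕ}

lemma Z_le_D_pow_zero (hq : q ≠ 0) : Dgrp n ((q:ℚ)^0) ≤ intVecs n := by
  rw [pow_zero, ← intVecs_eq_Dgrp]

lemma lidx_ne (hq : q ≠ 0) (hT : ClearDen T q) (k : ℕ) : lidx T k ≠ 0 := by
  refine relindex_ne_zero hq 0 (k+1) ?_ (Mf_le_succ T k) (Mf_le_D T hq hT (k+1))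
  exact le_trans (Z_le_D_pow_zero hq) (Z_le_Mf T k)

lemma ridx_ne (hq : q ≠ 0) (hT : ClearDen T q) (hT' : ClearDen T⁻¹ q) (k : ℕ) :
    ridx T k ≠ 0 := by
  refine relindex_ne_zero hq 1 (k+1) ?_ (amap_Mf_le T k) (Mf_le_D T hq hT (k+1))
  refine le_trans ?_ (amap_mono T (Z_le_Mf T k))
  have h := D_le_amap_pow T hq hT' 1
  rw [pow_one] at h ⊢
  rwa [pow_one] at h

lemma lidx_dvd (k : ℕ) : lidx T (k+1) ∣ lidx T k := by
  have h1 : lidx T (k+1) = (Mf T (k+1)).relIndex (amap T (Mf T (k+1))) := by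
    rw [lidx, Mf_sup_succ T (k+1), AddSubgroup.relIndex_sup_left]
  have h2 : (Mf T (k+1)).relIndex (amap T (Mf T (k+1)))
      ∣ (amap T (Mf T k)).relIndex (amap T (Mf T (k+1))) :=
    AddSubgroup.relIndex_dvd_of_le_left _ (amap_Mf_le T k)
  rw [h1]
  rw [relindex_amap] at h2
  exact h2

lemma ridx_rec (k : ℕ) : lidx T k * ridx T (k+1) = ridx T k * lidx T (k+1) := by
  have t1 : ridx T k * lidx T (k+1) = (amap T (Mf T k)).relIndex (Mf T (k+2)) :=
    AddSubgroup.relIndex_mul_relIndex _ _ _ (amap_Mf_le T k) (Mf_le_succ T (k+1))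
  have t2 : (amap T (Mf T k)).relIndex (amap T (Mf T (k+1))) * ridx T (k+1)
      = (amap T (Mf T k)).relIndex (Mf T (k+2)) :=
    AddSubgroup.relIndex_mul_relIndex _ _ _ (amap_mono T (Mf_le_succ T k)) (amap_Mf_le T (k+1))
  rw [relindex_amap] at t2
  rw [← lidx] at t2
  rw [t2, t1]

lemma ridx_zero : ridx T 0 = lidx T⁻¹ 0 := by
  have h1 : ridx T 0 = (amap T (intVecs n)).relIndex (intVecs n ⊔ amap T (intVecs n)) := rfl
  have h2 : lidx T⁻¹ 0 = (intVecs n).relIndex (intVecs n ⊔ amap T⁻¹ (intVecs n)) := rfl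
  rw [h1, h2, AddSubgroup.relIndex_sup_right, AddSubgroup.relIndex_sup_left]
  have h3 : (amap T (intVecs n)).relIndex (amap T (amap T⁻¹ (intVecs n)))
      = (intVecs n).relIndex (amap T⁻¹ (intVecs n)) := relindex_amap T _ _
  rw [← amap_mul, mul_inv_cancel, amap_one] at h3
  exact h3

lemma ridx_eq (hq : q ≠ 0) (hT : ClearDen T q) (k : ℕ) :
    ridx T k * lidx T 0 = lidx T k * lidx T⁻¹ 0 := by
  induction k with
  | zero => rw [ridx_zero, mul_comm]
  | succ k ih =>
      have hrec := ridx_rec T k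
      have hlne : lidx T k ≠ 0 := lidx_ne T hq hT k
      have : lidx T k * (ridx T (k+1) * lidx T 0) = lidx T k * (lidx T (k+1) * lidx T⁻¹ 0) := by
        calc lidx T k * (ridx T (k+1) * lidx T 0)
            = (lidx T k * ridx T (k+1)) * lidx T 0 := by ring
          _ = (ridx T k * lidx T (k+1)) * lidx T 0 := by rw [hrec]
          _ = lidx T (k+1) * (ridx T k * lidx T 0) := by ring
          _ = lidx T (k+1) * (lidx T k * lidx T⁻¹ 0) := by rw [ih]
          _ = lidx T k * (lidx T (k+1) * lidx T⁻¹ 0) := by ring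
      exact Nat.eq_of_mul_eq_mul_left (Nat.pos_of_ne_zero hlne) this

lemma c_prod (j k : ℕ) : (amap (T^j) (Mf T k)).relIndex (Mf T (j + k))
    = ∏ i ∈ Finset.range j, ridx T (k + i) := by
  induction j generalizing k with
  | zero =>
      rw [pow_zero, amap_one, Nat.zero_add, AddSubgroup.relIndex_self, Finset.prod_range_zero]
  | succ j ih =>
      have hle1 : amap (T^(j+1)) (Mf T k) ≤ amap (T^j) (Mf T (k+1)) := by
        rw [pow_succ, amap_mul]
        exact amap_mono _ (amap_Mf_le T k)
      have hle2 : amap (T^j) (Mf T (k+1)) ≤ Mf T (j + (k+1)) := amap_pow_Mf_le T j (k+1)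
      have heq : j + 1 + k = j + (k + 1) := by omega
      have t1 : (amap (T^(j+1)) (Mf T k)).relIndex (amap (T^j) (Mf T (k+1)))
          * (amap (T^j) (Mf T (k+1))).relIndex (Mf T (j + (k+1)))
          = (amap (T^(j+1)) (Mf T k)).relIndex (Mf T (j + (k+1))) :=
        AddSubgroup.relIndex_mul_relIndex _ _ _ hle1 hle2
      have t2 : (amap (T^(j+1)) (Mf T k)).relIndex (amap (T^j) (Mf T (k+1))) = ridx T k := by
        rw [pow_succ, amap_mul, relindex_amap]
        rfl
      rw [heq, ← t1, t2, ih (k+1), Finset.prod_range_succ']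
      rw [mul_comm]
      congr 1
      refine Finset.prod_congr rfl fun i _ => ?_
      congr 1
      omega

lemma a_prod (k : ℕ) : (intVecs n).relIndex (Mf T k) = ∏ j ∈ Finset.range k, lidx T j := by
  induction k with
  | zero => rw [Mf_zero, AddSubgroup.relIndex_self, Finset.prod_range_zero]
  | succ k ih =>
      have := AddSubgroup.relIndex_mul_relIndex (intVecs n) (Mf T k) (Mf T (k+1))
        (Z_le_Mf T k) (Mf_le_succ T k)
      rw [← this, ih, Finset.prod_range_succ]
      rfl

lemma key1 (k : ℕ) :
    (intVecs n).relIndex (Mf T k ⊓ Mf T⁻¹ k) * ((amap (T^k) (Mf T k)).relIndex (Mf T (2*k)))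
      = (intVecs n).relIndex (Mf T⁻¹ k) := by
  have hZG : intVecs n ≤ Mf T k ⊓ Mf T⁻¹ k := le_inf (Z_le_Mf T k) (Z_le_Mf T⁻¹ k)
  have t1 : (intVecs n).relIndex (Mf T k ⊓ Mf T⁻¹ k)
      * (Mf T k ⊓ Mf T⁻¹ k).relIndex (Mf T⁻¹ k) = (intVecs n).relIndex (Mf T⁻¹ k) :=
    AddSubgroup.relIndex_mul_relIndex _ _ _ hZG inf_le_right
  have t2 : (Mf T k ⊓ Mf T⁻¹ k).relIndex (Mf T⁻¹ k) = (Mf T k).relIndex (Mf T⁻¹ k) :=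
    AddSubgroup.inf_relIndex_right _ _
  have t3 : (Mf T k).relIndex (Mf T⁻¹ k ⊔ Mf T k) = (Mf T k).relIndex (Mf T⁻¹ k) :=
    AddSubgroup.relIndex_sup_right _ _
  have t5 : (amap (T^k) (Mf T k)).relIndex (amap (T^k) (Mf T k ⊔ Mf T⁻¹ k))
      = (Mf T k).relIndex (Mf T k ⊔ Mf T⁻¹ k) := relindex_amap _ _ _
  rw [supMN] at t5
  rw [t5, sup_comm, t3, ← t2, t1]

lemma key2 (hq : q ≠ 0) (hT : ClearDen T q) (k : ℕ) :
    (intVecs n).relIndex (Mf T k ⊓ Mf T⁻¹ k)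
      * ((∏ i ∈ Finset.range k, lidx T (k+i)) * (lidx T⁻¹ 0)^k)
    = (intVecs n).relIndex (Mf T⁻¹ k) * (lidx T 0)^k := by
  have h1 := key1 T k
  have h2 : (amap (T^k) (Mf T k)).relIndex (Mf T (2*k))
      = ∏ i ∈ Finset.range k, ridx T (k + i) := by
    rw [two_mul]
    exact c_prod T k k
  have h3 : (∏ i ∈ Finset.range k, ridx T (k + i)) * (lidx T 0)^k
      = (∏ i ∈ Finset.range k, lidx T (k+i)) * (lidx T⁻¹ 0)^k := by
    calc (∏ i ∈ Finset.range k, ridx T (k + i)) * (lidx T 0)^k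
        = ∏ i ∈ Finset.range k, (ridx T (k + i) * lidx T 0) := by
          rw [Finset.prod_mul_distrib, Finset.prod_const, Finset.card_range]
      _ = ∏ i ∈ Finset.range k, (lidx T (k + i) * lidx T⁻¹ 0) :=
          Finset.prod_congr rfl fun i _ => ridx_eq T hq hT (k + i)
      _ = (∏ i ∈ Finset.range k, lidx T (k+i)) * (lidx T⁻¹ 0)^k := by
          rw [Finset.prod_mul_distrib, Finset.prod_const, Finset.card_range]
  calc (intVecs n).relIndex (Mf T k ⊓ Mf T⁻¹ k)
        * ((∏ i ∈ Finset.range k, lidx T (k+i)) * (lidx T⁻¹ 0)^k)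
      = (intVecs n).relIndex (Mf T k ⊓ Mf T⁻¹ k)
        * ((∏ i ∈ Finset.range k, ridx T (k + i)) * (lidx T 0)^k) := by rw [h3]
    _ = ((intVecs n).relIndex (Mf T k ⊓ Mf T⁻¹ k)
        * (∏ i ∈ Finset.range k, ridx T (k + i))) * (lidx T 0)^k := by ring
    _ = (intVecs n).relIndex (Mf T⁻¹ k) * (lidx T 0)^k := by rw [← h2, h1]

lemma final_eq (hq : q ≠ 0) (hT : ClearDen T q) (hT' : ClearDen T⁻¹ q) (k : ℕ) :
    (intVecs n).relIndex (Mf T k ⊓ Mf T⁻¹ k) * (intVecs n).relIndex (Mf T k ⊓ Mf T⁻¹ k)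
      * ∏ i ∈ Finset.range k, (lidx T (k+i) * lidx T⁻¹ (k+i))
    = ∏ j ∈ Finset.range k, (lidx T j * lidx T⁻¹ j) := by
  have hTT : ClearDen T⁻¹⁻¹ q := by rwa [inv_inv]
  have h1 := key2 T hq hT k
  have h2 := key2 T⁻¹ hq hT' k
  rw [inv_inv] at h2
  rw [inf_comm (Mf T⁻¹ k) (Mf T k)] at h2
  set L := (intVecs n).relIndex (Mf T k ⊓ Mf T⁻¹ k) with hL
  set P1 := ∏ i ∈ Finset.range k, lidx T (k+i) with hP1
  set P2 := ∏ i ∈ Finset.range k, lidx T⁻¹ (k+i) with hP2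
  set a0 := lidx T 0 with ha0
  set b0 := lidx T⁻¹ 0 with hb0
  have hC : (a0 * b0)^k ≠ 0 := by
    apply pow_ne_zero
    exact Nat.mul_ne_zero (lidx_ne T hq hT 0) (lidx_ne T⁻¹ hq hT' 0)
  have hprod1 : ∏ i ∈ Finset.range k, (lidx T (k+i) * lidx T⁻¹ (k+i)) = P1 * P2 :=
    Finset.prod_mul_distrib
  have hprod2 : ∏ j ∈ Finset.range k, (lidx T j * lidx T⁻¹ j)
      = (intVecs n).relIndex (Mf T k) * (intVecs n).relIndex (Mf T⁻¹ k) := by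
    rw [Finset.prod_mul_distrib, a_prod, a_prod]
  refine Nat.eq_of_mul_eq_mul_right (Nat.pos_of_ne_zero hC) ?_
  calc (L * L * ∏ i ∈ Finset.range k, (lidx T (k+i) * lidx T⁻¹ (k+i))) * (a0*b0)^k
      = (L * (P1 * b0^k)) * (L * (P2 * a0^k)) := by rw [hprod1, mul_pow]; ring
    _ = ((intVecs n).relIndex (Mf T⁻¹ k) * a0^k) * ((intVecs n).relIndex (Mf T k) * b0^k) := by
          rw [h1, h2]
    _ = ((∏ j ∈ Finset.range k, (lidx T j * lidx T⁻¹ j))) * (a0*b0)^k := by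
          rw [hprod2, mul_pow]; ring

lemma relindex_bound (hq : q ≠ 0) (hT : ClearDen T q) (hT' : ClearDen T⁻¹ q) :
    ∃ C : ℕ, C ≠ 0 ∧ ∀ k, (intVecs n).relIndex (Mf T k ⊓ Mf T⁻¹ k) ≤ C := by
  classical
  set u : ℕ → ℕ := fun j => lidx T j * lidx T⁻¹ j with hu
  have u_ne : ∀ j, u j ≠ 0 := fun j =>
    Nat.mul_ne_zero (lidx_ne T hq hT j) (lidx_ne T⁻¹ hq hT' j)
  have u_anti : Antitone u := by
    apply antitone_nat_of_succ_le
    intro j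
    exact Nat.le_of_dvd (Nat.pos_of_ne_zero (u_ne j))
      (mul_dvd_mul (lidx_dvd T j) (lidx_dvd T⁻¹ j))
  obtain ⟨k₀, hk₀⟩ : ∃ k₀, u k₀ = sInf (Set.range u) := Nat.sInf_mem (Set.range_nonempty u)
  set K := sInf (Set.range u) with hK
  have hconst : ∀ j, k₀ ≤ j → u j = K := fun j hj =>
    le_antisymm (hk₀ ▸ u_anti hj) (Nat.sInf_le ⟨j, rfl⟩)
  have hKne : K ≠ 0 := hk₀ ▸ u_ne k₀
  refine ⟨∏ j ∈ Finset.range k₀, u j, Finset.prod_ne_zero_iff.mpr (fun j _ => u_ne j), ?_⟩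
  intro k
  set C := ∏ j ∈ Finset.range k₀, u j with hC
  have hfe := final_eq T hq hT hT' k
  set L := (intVecs n).relIndex (Mf T k ⊓ Mf T⁻¹ k) with hLd
  set X := ∏ i ∈ Finset.range k, u (k+i) with hX
  set Y := ∏ j ∈ Finset.range k, u j with hY
  have hXne : X ≠ 0 := Finset.prod_ne_zero_iff.mpr (fun j _ => u_ne _)
  have hLne : L ≠ 0 := by
    refine relindex_ne_zero hq 0 k ?_ (le_inf (Z_le_Mf T k) (Z_le_Mf T⁻¹ k))
      (le_trans inf_le_left (Mf_le_D T hq hT k))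
    exact Z_le_D_pow_zero hq
  have hYle : Y ≤ C * X := by
    by_cases hk : k ≤ k₀
    · have h1 : Y ≤ C := by
        refine Finset.prod_le_prod_of_subset_of_one_le' (Finset.range_subset_range.mpr hk) ?_
        intro i _ _
        exact Nat.one_le_iff_ne_zero.mpr (u_ne i)
      exact le_trans h1 (Nat.le_mul_of_pos_right C (Nat.pos_of_ne_zero hXne))
    · push_neg at hk
      have hk' : k₀ ≤ k := le_of_lt hk
      have hsplit : C * ∏ j ∈ Finset.Ico k₀ k, u j = Y := by
        rw [hC, hY, Finset.range_eq_Ico, Finset.range_eq_Ico]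
        exact Finset.prod_Ico_consecutive u (Nat.zero_le k₀) hk'
      have hIco : ∏ j ∈ Finset.Ico k₀ k, u j = K^(k - k₀) := by
        rw [Finset.prod_congr rfl (fun j hj => hconst j (Finset.mem_Ico.mp hj).1),
          Finset.prod_const, Nat.card_Ico]
      have hXeq : X = K^k := by
        rw [hX, Finset.prod_congr rfl (fun i _ => hconst (k+i) (le_trans hk' (Nat.le_add_right _ _))),
          Finset.prod_const, Finset.card_range]
      rw [← hsplit, hIco, hXeq]
      exact Nat.mul_le_mul_left C (Nat.pow_le_pow_right (Nat.pos_of_ne_zero hKne) (Nat.sub_le _ _))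
  have hLL : L * L ≤ C := by
    have : L * L * X ≤ C * X := by rw [hfe]; exact hYle
    exact Nat.le_of_mul_le_mul_right this (Nat.pos_of_ne_zero hXne)
  calc L ≤ L * L := Nat.le_mul_of_pos_left L (Nat.pos_of_ne_zero hLne)
    _ ≤ C := hLL




open Matrix

/-- the additive automorphism of `ℚ^n` given by an invertible matrix -/
noncomputable def matAut (A : Matrix (Fin n) (Fin n) ℚ) (hA : IsUnit A.det) : AddAut (Fin n → ℚ) where
  toFun := A.mulVec
  invFun := A⁻¹.mulVec
  left_inv := fun x => by
    rw [Matrix.mulVec_mulVec, Matrix.nonsing_inv_mul A hA, Matrix.one_mulVec]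
  right_inv := fun x => by
    rw [Matrix.mulVec_mulVec, Matrix.mul_nonsing_inv A hA, Matrix.one_mulVec]
  map_add' := fun x y => A.mulVec_add x y

lemma matAut_apply (A : Matrix (Fin n) (Fin n) ℚ) (hA : IsUnit A.det) (x : Fin n → ℚ) :
    matAut A hA x = A *ᵥ x := rfl

lemma matAut_inv_apply (A : Matrix (Fin n) (Fin n) ℚ) (hA : IsUnit A.det) (x : Fin n → ℚ) :
    (matAut A hA)⁻¹ x = A⁻¹ *ᵥ x := rfl

lemma aut_pow_apply (e : AddAut (Fin n → ℚ)) (B : Matrix (Fin n) (Fin n) ℚ)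
    (he : ∀ x, e x = B *ᵥ x) (j : ℕ) (x : Fin n → ℚ) : (e^j) x = (B^j) *ᵥ x := by
  induction j with
  | zero => rw [pow_zero, pow_zero, aut_one_apply, Matrix.one_mulVec]
  | succ j ih =>
      rw [pow_succ' e, aut_mul_apply, ih, he, Matrix.mulVec_mulVec, ← pow_succ']

lemma den_clear {a : ℚ} {d : ℕ} (hd : a.den ∣ d) : ∃ c : ℤ, (d:ℚ) * a = c := by
  obtain ⟨t, ht⟩ := hd
  refine ⟨t * a.num, ?_⟩
  have hden : ((a.den : ℚ)) ≠ 0 := Nat.cast_ne_zero.mpr a.den_nz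
  have hda : ((a.den : ℚ)) * a = a.num := by
    rw [mul_comm]
    exact ((div_eq_iff hden).mp (Rat.num_div_den a)).symm
  calc (d:ℚ) * a = (t : ℚ) * ((a.den : ℚ) * a) := by rw [ht]; push_cast; ring
    _ = (t : ℚ) * a.num := by rw [hda]
    _ = ((t * a.num : ℤ) : ℚ) := by push_cast; ring

/-- common denominator of all entries of `A` and `A⁻¹` -/
noncomputable def qden (A : Matrix (Fin n) (Fin n) ℚ) : ℕ :=
  (∏ i, ∏ j, (A i j).den) * (∏ i, ∏ j, (A⁻¹ i j).den)

lemma qden_ne_zero (A : Matrix (Fin n) (Fin n) ℚ) : qden A ≠ 0 := by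
  apply Nat.mul_ne_zero <;>
  · refine Finset.prod_ne_zero_iff.mpr fun i _ => ?_
    exact Finset.prod_ne_zero_iff.mpr fun j _ => Rat.den_nz _

lemma qden_clear₁ (A : Matrix (Fin n) (Fin n) ℚ) (i j : Fin n) :
    ∃ c : ℤ, ((qden A : ℚ)) * A i j = c := by
  apply den_clear
  have h1 : (A i j).den ∣ ∏ j', (A i j').den :=
    Finset.dvd_prod_of_mem _ (Finset.mem_univ j)
  have h2 : (∏ j', (A i j').den) ∣ ∏ i', ∏ j', (A i' j').den :=
    Finset.dvd_prod_of_mem _ (Finset.mem_univ i)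
  exact dvd_mul_of_dvd_left (h1.trans h2) _

lemma qden_clear₂ (A : Matrix (Fin n) (Fin n) ℚ) (i j : Fin n) :
    ∃ c : ℤ, ((qden A : ℚ)) * A⁻¹ i j = c := by
  apply den_clear
  have h1 : (A⁻¹ i j).den ∣ ∏ j', (A⁻¹ i j').den :=
    Finset.dvd_prod_of_mem _ (Finset.mem_univ j)
  have h2 : (∏ j', (A⁻¹ i j').den) ∣ ∏ i', ∏ j', (A⁻¹ i' j').den :=
    Finset.dvd_prod_of_mem _ (Finset.mem_univ i)
  exact dvd_mul_of_dvd_right (h1.trans h2) _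

lemma clearDen_of {q : ℕ} (hq : q ≠ 0) (e : AddAut (Fin n → ℚ)) (B : Matrix (Fin n) (Fin n) ℚ)
    (he : ∀ x, e x = B *ᵥ x) (hden : ∀ i j, ∃ c : ℤ, (q:ℚ) * B i j = c) : ClearDen e q := by
  intro Q x hx
  choose m hm using hx
  choose c hc using hden
  intro i
  refine ⟨∑ j, c i j * m j, ?_⟩
  have hq' : ((q:ℚ)) ≠ 0 := Nat.cast_ne_zero.mpr hq
  have h1 : e x i = ∑ j, B i j * x j := by
    rw [he]
    simp [Matrix.mulVec, dotProduct]
  rw [h1]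
  push_cast
  rw [Finset.sum_mul]
  refine Finset.sum_congr rfl fun j _ => ?_
  rw [hm j, ← hc i j]
  field_simp

lemma mem_Mf_of_intSpan (B : Matrix (Fin n) (Fin n) ℚ) (e : AddAut (Fin n → ℚ))
    (he : ∀ x, e x = B *ᵥ x) {x : Fin n → ℚ} (hx : x ∈ intSpan n B) :
    ∃ k, x ∈ Mf e k := by
  have hle : intSpan n B ≤ ⨆ k, Mf e k := by
    rw [intSpan, AddSubgroup.closure_le]
    rintro y ⟨j, z, rfl⟩
    have h1 : (B ^ j) *ᵥ (fun i => ((z i : ℚ))) = (e^j) (fun i => ((z i : ℚ))) :=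
      (aut_pow_apply e B he j _).symm
    apply SetLike.mem_coe.mpr
    refine le_iSup (Mf e) j ?_
    apply amap_pow_Z_le e j
    rw [mem_amap]
    exact ⟨_, fun i => ⟨z i, rfl⟩, h1.symm⟩
  have := hle hx
  rwa [AddSubgroup.mem_iSup_of_directed ((Mf_mono e).directed_le)] at this

lemma denom_bound (A : Matrix (Fin n) (Fin n) ℚ) (hA : IsUnit A.det) :
    ∃ F : ℕ, F ≠ 0 ∧ ∀ x ∈ intSpan n A ⊓ intSpan n A⁻¹, F • x ∈ intVecs n := by
  set T := matAut A hA with hT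
  set q := qden A with hqd
  have hq : q ≠ 0 := qden_ne_zero A
  have hcd : ClearDen T q := clearDen_of hq T A (matAut_apply A hA) (qden_clear₁ A)
  have hcd' : ClearDen T⁻¹ q := clearDen_of hq T⁻¹ A⁻¹ (matAut_inv_apply A hA) (qden_clear₂ A)
  obtain ⟨C, hC, hbound⟩ := relindex_bound T hq hcd hcd'
  refine ⟨C.factorial, Nat.factorial_ne_zero C, ?_⟩
  rintro x ⟨hx1, hx2⟩
  obtain ⟨k1, hk1⟩ := mem_Mf_of_intSpan A T (matAut_apply A hA) hx1
  obtain ⟨k2, hk2⟩ := mem_Mf_of_intSpan A⁻¹ T⁻¹ (matAut_inv_apply A hA) hx2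
  set k := max k1 k2 with hk
  have hxM : x ∈ Mf T k := Mf_mono T (le_max_left k1 k2) hk1
  have hxN : x ∈ Mf T⁻¹ k := Mf_mono T⁻¹ (le_max_right k1 k2) hk2
  set G := Mf T k ⊓ Mf T⁻¹ k with hG
  set L := (intVecs n).relIndex G with hLd
  have hLne : L ≠ 0 := by
    refine relindex_ne_zero hq 0 k ?_ (le_inf (Z_le_Mf T k) (Z_le_Mf T⁻¹ k))
      (le_trans inf_le_left (Mf_le_D T hq hcd k))
    exact Z_le_D_pow_zero hq
  have hdvd : L ∣ C.factorial := Nat.dvd_factorial (Nat.pos_of_ne_zero hLne) (hbound k)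
  obtain ⟨t, ht⟩ := hdvd
  set y : ↥G := ⟨x, hxM, hxN⟩ with hy
  have h4 : ((intVecs n).addSubgroupOf G).index • y ∈ (intVecs n).addSubgroupOf G :=
    AddSubgroup.nsmul_index_mem _ y
  have h5 : L • x ∈ intVecs n := by
    have := (AddSubgroup.mem_addSubgroupOf).mp h4
    exact this
  rw [ht, mul_comm, mul_smul]
  exact AddSubgroup.nsmul_mem _ h5 t

lemma Z_le_intSpan (B : Matrix (Fin n) (Fin n) ℚ) : intVecs n ≤ intSpan n B := by
  intro z hz
  apply AddSubgroup.subset_closure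
  refine ⟨0, fun i => (hz i).choose, ?_⟩
  funext i
  rw [pow_zero, Matrix.one_mulVec]
  exact (hz i).choose_spec

end Stmt8


theorem stmt8 (n : ℕ) (A : Matrix (Fin n) (Fin n) ℚ) (hA : IsUnit A.det) :
    -- discreteness: some open ball around 0 contains no nonzero element
    (∃ ε > (0 : ℝ), ∀ z : Fin n → ℚ, z ∈ intSpan n A ⊓ intSpan n A⁻¹ → z ≠ 0 →
      ε ≤ euclNormQ n z) ∧
    -- it contains ℤ^n
    intVecs n ≤ intSpan n A ⊓ intSpan n A⁻¹ ∧
    -- and in particular it spans ℝ^n over ℝ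
    Submodule.span ℝ
        {x : Fin n → ℝ | ∃ z : Fin n → ℚ,
          z ∈ intSpan n A ⊓ intSpan n A⁻¹ ∧ x = fun i => ((z i : ℝ))} = ⊤ := by
  obtain ⟨F, hF, hFx⟩ := Stmt8.denom_bound A hA
  have hFQ : ((F:ℚ)) ≠ 0 := Nat.cast_ne_zero.mpr hF
  have hFR : (0:ℝ) < (F:ℝ) := by exact_mod_cast Nat.pos_of_ne_zero hF
  have hcontain : intVecs n ≤ intSpan n A ⊓ intSpan n A⁻¹ :=
    le_inf (Stmt8.Z_le_intSpan A) (Stmt8.Z_le_intSpan A⁻¹)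
  refine ⟨⟨1/(F:ℝ), by positivity, ?_⟩, hcontain, ?_⟩
  · -- discreteness
    intro z hz hz0
    have hzZ := hFx z hz
    obtain ⟨i, hi⟩ : ∃ i, z i ≠ 0 := by
      by_contra h
      push_neg at h
      exact hz0 (funext h)
    obtain ⟨m, hm⟩ := hzZ i
    have hFzi : (F:ℚ) * z i = (m:ℚ) := by
      have h1 : (F • z) i = (F:ℚ) * z i := by
        simp [nsmul_eq_mul]
      rw [← h1, hm]
    have hm0 : m ≠ 0 := by
      intro h
      apply hi
      rw [h] at hFzi
      push_cast at hFzi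
      rcases mul_eq_zero.mp hFzi with h' | h'
      · exact absurd h' hFQ
      · exact h'
    have habs : (1:ℚ) ≤ |z i| * F := by
      have h1 : |(F:ℚ)| * |z i| = |(m:ℚ)| := by rw [← abs_mul, hFzi]
      have h2 : (1:ℚ) ≤ |(m:ℚ)| := by
        have : (1:ℤ) ≤ |m| := Int.one_le_abs hm0
        calc (1:ℚ) ≤ ((|m| : ℤ) : ℚ) := by exact_mod_cast this
          _ = |(m:ℚ)| := by push_cast; rfl
      rw [abs_of_nonneg (by positivity : (0:ℚ) ≤ (F:ℚ))] at h1
      calc (1:ℚ) ≤ |(m:ℚ)| := h2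
        _ = (F:ℚ) * |z i| := h1.symm
        _ = |z i| * F := by ring
    have hR' : (1:ℝ) ≤ |((z i : ℚ) : ℝ)| * (F:ℝ) := by exact_mod_cast habs
    have hR : (1:ℝ)/(F:ℝ) ≤ |((z i : ℚ) : ℝ)| := by
      rw [div_le_iff₀ hFR]
      linarith
    have h3 : |((z i:ℚ):ℝ)| ≤ euclNormQ n z := by
      rw [euclNormQ, ← Real.sqrt_sq_eq_abs]
      apply Real.sqrt_le_sqrt
      exact Finset.single_le_sum (f := fun j => ((z j:ℚ):ℝ)^2)
        (fun j _ => sq_nonneg _) (Finset.mem_univ i)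
    linarith
  · -- spanning
    have hgen : ∀ i : Fin n, (Pi.single i (1:ℝ)) ∈
        {x : Fin n → ℝ | ∃ z : Fin n → ℚ,
          z ∈ intSpan n A ⊓ intSpan n A⁻¹ ∧ x = fun i => ((z i : ℝ))} := by
      intro i
      refine ⟨Pi.single i (1:ℚ), hcontain (fun j => ⟨if j = i then 1 else 0, ?_⟩), ?_⟩
      · rw [Pi.single_apply]
        split <;> simp
      · funext j
        rw [Pi.single_apply, Pi.single_apply]
        split <;> simp
    rw [eq_top_iff, ← (Pi.basisFun ℝ (Fin n)).span_eq]
    apply Submodule.span_mono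
    rintro _ ⟨i, rfl⟩
    rw [Pi.basisFun_apply]
    exact hgen i
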